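/- Let π : L∞(F) → L∞(G) be regular, and fix at most countably many finite G-measurable partitions {Γ(h)} and Q ≪ P. Then there exists a single sequence {ξ_m} ⊂ L∞(F) with E_Q[ξ_m|G] ≥_Q E_Q[X|G] for all m, π(ξ_m) ↓ K(X,Q), and simultaneously π^{Γ(h)}(ξ_m) ↓ K^{Γ(h)}(X,Q) as m → ∞, for every h. -/

import Mathlib

open MeasureTheory Filter Set

noncomputable section

/-- `X` is a bounded `F`-measurable random variable (an element of `L∞(F)`). -/
def IsBddMeas {Ω : Type*} (F : MeasurableSpace Ω) (X : Ω → ℝ) : Prop :=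
  Measurable[F] X ∧ ∃ C : ℝ, ∀ ω, |X ω| ≤ C

/-- Regularity (REG) of the conditional map `π` with respect to the
sub-σ-algebra `m`: `π (X 1_A + Y 1_{Aᶜ}) = π X 1_A + π Y 1_{Aᶜ}` a.s. -/
def Regular {Ω : Type*} (F m : MeasurableSpace Ω) (μ : @Measure Ω F)
    (π : (Ω → ℝ) → Ω → ℝ) : Prop :=
  ∀ X Y : Ω → ℝ, IsBddMeas F X → IsBddMeas F Y → ∀ A : Set Ω, MeasurableSet[m] A →
    π (A.indicator X + Aᶜ.indicator Y) =ᵐ[μ] A.indicator (π X) + Aᶜ.indicator (π Y)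

/-- `I` is an essential infimum (in the `μ`-a.e. pointwise order) of the set
`S` of random variables. -/
def IsEssInf {Ω : Type*} {F : MeasurableSpace Ω} (μ : @Measure Ω F)
    (S : Set (Ω → ℝ)) (I : Ω → ℝ) : Prop :=
  (∀ f ∈ S, I ≤ᵐ[μ] f) ∧ ∀ g : Ω → ℝ, (∀ f ∈ S, g ≤ᵐ[μ] f) → g ≤ᵐ[μ] I

/-- `I` is an essential supremum (in the `μ`-a.e. pointwise order) of the set
`S` of random variables. -/
def IsEssSup {Ω : Type*} {F : MeasurableSpace Ω} (μ : @Measure Ω F)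
    (S : Set (Ω → ℝ)) (I : Ω → ℝ) : Prop :=
  (∀ f ∈ S, f ≤ᵐ[μ] I) ∧ ∀ g : Ω → ℝ, (∀ f ∈ S, f ≤ᵐ[μ] g) → I ≤ᵐ[μ] g

/-- A finite partition of `Ω` into `m`-measurable sets. -/
def IsPartition {Ω : Type*} (m : MeasurableSpace Ω) (Γ : Finset (Set Ω)) : Prop :=
  (∀ A ∈ Γ, MeasurableSet[m] A) ∧
  ((Γ : Set (Set Ω)).PairwiseDisjoint id) ∧
  ⋃₀ (Γ : Set (Set Ω)) = Set.univ

/-- The step approximation `f^Γ = ∑_{A ∈ Γ} (ess sup_A f) 1_A` of a random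
variable `f` along a finite partition `Γ`. -/
def partApprox {Ω : Type*} {F : MeasurableSpace Ω} (μ : @Measure Ω F)
    (Γ : Finset (Set Ω)) (f : Ω → ℝ) : Ω → ℝ :=
  fun ω => ∑ A ∈ Γ, A.indicator (fun _ => essSup f (μ.restrict A)) ω

lemma essSup_mono_ae_real' {Ω : Type*} {F : MeasurableSpace Ω} (ν : @Measure Ω F)
    {f g : Ω → ℝ} (h : f ≤ᵐ[ν] g) (hf : ∃ C, ∀ ω, |f ω| ≤ C) (hg : ∃ C, ∀ ω, |g ω| ≤ C) :
    essSup f ν ≤ essSup g ν := by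
  by_cases hν : ν = 0
  · subst hν; simp [essSup, Filter.limsup, Filter.limsSup]
  · have : (ae ν).NeBot := ae_neBot.mpr hν
    obtain ⟨Cf, hCf⟩ := hf
    obtain ⟨Cg, hCg⟩ := hg
    refine limsup_le_limsup h ?_ ?_
    · exact (isBoundedUnder_of (r := (· ≥ ·))
        ⟨-Cf, fun ω => (abs_le.mp (hCf ω)).1⟩).isCoboundedUnder_le
    · exact isBoundedUnder_of ⟨Cg, fun ω => (abs_le.mp (hCg ω)).2⟩

lemma partApprox_mono' {Ω : Type*} {F : MeasurableSpace Ω} (μ : @Measure Ω F)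
    (Γ : Finset (Set Ω)) {f g : Ω → ℝ} (h : f ≤ᵐ[μ] g)
    (hf : ∃ C, ∀ ω, |f ω| ≤ C) (hg : ∃ C, ∀ ω, |g ω| ≤ C) :
    ∀ ω, partApprox μ Γ f ω ≤ partApprox μ Γ g ω := by
  intro ω
  refine Finset.sum_le_sum fun A _ => ?_
  have hle : essSup f (μ.restrict A) ≤ essSup g (μ.restrict A) :=
    essSup_mono_ae_real' _ (ae_restrict_of_ae h) hf hg
  by_cases hA : ω ∈ A
  · simpa [Set.indicator_of_mem hA] using hle
  · simp [Set.indicator_of_notMem hA]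

lemma partApprox_bdd' {Ω : Type*} {F : MeasurableSpace Ω} (μ : @Measure Ω F)
    (Γ : Finset (Set Ω)) (f : Ω → ℝ) :
    ∃ C, ∀ ω, |partApprox μ Γ f ω| ≤ C := by
  refine ⟨∑ A ∈ Γ, |essSup f (μ.restrict A)|, fun ω => ?_⟩
  refine (Finset.abs_sum_le_sum_abs _ _).trans (Finset.sum_le_sum fun A _ => ?_)
  by_cases hA : ω ∈ A
  · simp [Set.indicator_of_mem hA]
  · simp [Set.indicator_of_notMem hA, abs_nonneg]

lemma partApprox_meas' {Ω : Type*} {F : MeasurableSpace Ω} (μ : @Measure Ω F)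
    (m : MeasurableSpace Ω) (hm : m ≤ F) (Γ : Finset (Set Ω)) (hΓ : ∀ A ∈ Γ, MeasurableSet[m] A)
    (f : Ω → ℝ) : Measurable[F] (partApprox μ Γ f) := by
  refine Finset.measurable_sum _ fun A hA => ?_
  exact (measurable_const).indicator (hm _ (hΓ A hA))

open Real in
lemma exists_seq_of_isEssInf' {Ω : Type*} {F : MeasurableSpace Ω} (μ : @Measure Ω F)
    [IsProbabilityMeasure μ] (S : Set (Ω → ℝ)) (hne : S.Nonempty)
    (hmeas : ∀ f ∈ S, Measurable[F] f)
    (hdir : ∀ f ∈ S, ∀ g ∈ S, ∃ k ∈ S, k ≤ᵐ[μ] f ∧ k ≤ᵐ[μ] g)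
    {I : Ω → ℝ} (hI : IsEssInf μ S I) :
    ∃ u : ℕ → Ω → ℝ, (∀ n, u n ∈ S) ∧
      (∀ᵐ ω ∂μ, Tendsto (fun n => u n ω) atTop (nhds (I ω))) := by
  -- integrability of arctan ∘ f
  have intArc : ∀ f : Ω → ℝ, AEMeasurable f μ → Integrable (fun ω => arctan (f ω)) μ := by
    intro f hf
    refine Integrable.mono' (integrable_const (π / 2))
      (measurable_arctan.comp_aemeasurable hf).aestronglyMeasurable ?_
    exact Eventually.of_forall fun ω => by
      rw [Real.norm_eq_abs, abs_le]
      exact ⟨(neg_pi_div_two_lt_arctan _).le, (arctan_lt_pi_div_two _).le⟩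
  set R : Set ℝ := (fun f => ∫ ω, arctan (f ω) ∂μ) '' S with hR
  have hRne : R.Nonempty := hne.image _
  have hRbd : BddBelow R := by
    refine ⟨-(π / 2), fun r hr => ?_⟩
    obtain ⟨f, hfS, rfl⟩ := hr
    calc -(π/2) = ∫ _ : Ω, -(π/2) ∂μ := by simp
    _ ≤ ∫ ω, arctan (f ω) ∂μ :=
        integral_mono (integrable_const _) (intArc f (hmeas f hfS).aemeasurable)
          (fun ω => (neg_pi_div_two_lt_arctan _).le)
  set c : ℝ := sInf R with hc
  have hcle : ∀ f ∈ S, c ≤ ∫ ω, arctan (f ω) ∂μ := fun f hf => csInf_le hRbd ⟨f, hf, rfl⟩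
  -- near-minimizers
  have hfn : ∀ n : ℕ, ∃ f ∈ S, (∫ ω, arctan (f ω) ∂μ) < c + 1 / (n + 1) := by
    intro n
    have hpos : (0:ℝ) < 1 / ((n:ℝ) + 1) := by positivity
    have : sInf R < c + 1 / (n + 1) := by linarith [hc]
    obtain ⟨r, hrR, hr⟩ := exists_lt_of_csInf_lt hRne this
    obtain ⟨ff, hfS, rfl⟩ := hrR
    exact ⟨ff, hfS, hr⟩
  choose f hfS hfint using hfn
  -- decreasing pasted sequence g n ∈ S, g n ≤ f n, g (n+1) ≤ g n
  have step : ∀ p : {p : Ω → ℝ // p ∈ S}, ∀ n : ℕ, ∃ q : {q : Ω → ℝ // q ∈ S},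
      (q : Ω → ℝ) ≤ᵐ[μ] (p : Ω → ℝ) ∧ (q : Ω → ℝ) ≤ᵐ[μ] f n := by
    intro p n
    obtain ⟨q, hqS, hq1, hq2⟩ := hdir p p.2 (f n) (hfS n)
    exact ⟨⟨q, hqS⟩, hq1, hq2⟩
  choose stp hstp1 hstp2 using step
  set gs : ℕ → {p : Ω → ℝ // p ∈ S} :=
    fun n => Nat.rec ⟨f 0, hfS 0⟩ (fun n ih => stp ih (n + 1)) n with hgs
  set g : ℕ → Ω → ℝ := fun n => (gs n : Ω → ℝ) with hg
  have hgS : ∀ n, g n ∈ S := fun n => (gs n).2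
  have hgsucc : ∀ n, g (n + 1) ≤ᵐ[μ] g n := fun n => hstp1 (gs n) (n + 1)
  have hgf : ∀ n, g n ≤ᵐ[μ] f n := by
    intro n
    cases n with
    | zero => exact EventuallyLE.refl _ _
    | succ n => exact hstp2 (gs n) (n + 1)
  have hgmeas : ∀ n, Measurable[F] (g n) := fun n => hmeas _ (hgS n)
  have hgint : ∀ n, c ≤ ∫ ω, arctan (g n ω) ∂μ := fun n => hcle _ (hgS n)
  have hgint2 : ∀ n, (∫ ω, arctan (g n ω) ∂μ) < c + 1 / (n + 1) := by
    intro n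
    refine lt_of_le_of_lt ?_ (hfint n)
    refine integral_mono_ae (intArc _ (hgmeas n).aemeasurable)
      (intArc _ (hmeas _ (hfS n)).aemeasurable) ?_
    exact (hgf n).mono fun ω h => arctan_strictMono.monotone h
  -- a.e. pointwise convergence of g to G := ⨅ n, g n
  have hIg : ∀ n, I ≤ᵐ[μ] g n := fun n => hI.1 _ (hgS n)
  have hE : ∀ᵐ ω ∂μ, (∀ n, I ω ≤ g n ω) ∧ ∀ n, g (n + 1) ω ≤ g n ω := by
    refine ((ae_all_iff.mpr hIg).and (ae_all_iff.mpr hgsucc))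
  set G : Ω → ℝ := fun ω => ⨅ n, g n ω with hG
  have hconv : ∀ᵐ ω ∂μ, Tendsto (fun n => g n ω) atTop (nhds (G ω)) := by
    filter_upwards [hE] with ω ⟨h1, h2⟩
    exact tendsto_atTop_ciInf (antitone_nat_of_succ_le h2) ⟨I ω, by rintro x ⟨n, rfl⟩; exact h1 n⟩
  have hIG : ∀ᵐ ω ∂μ, I ω ≤ G ω := by
    filter_upwards [hE] with ω ⟨h1, _⟩
    exact le_ciInf h1
  have hGmeas : AEMeasurable G μ :=
    aemeasurable_of_tendsto_metrizable_ae atTop (fun n => (hgmeas n).aemeasurable) hconv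
  -- ∫ arctan G = c
  have harcconv : Tendsto (fun n => ∫ ω, arctan (g n ω) ∂μ) atTop (nhds (∫ ω, arctan (G ω) ∂μ)) := by
    refine tendsto_integral_of_dominated_convergence (fun _ => π / 2)
      (fun n => (measurable_arctan.comp (hgmeas n)).aestronglyMeasurable)
      (integrable_const _) (fun n => Eventually.of_forall fun ω => ?_) ?_
    · rw [Real.norm_eq_abs, abs_le]
      exact ⟨(neg_pi_div_two_lt_arctan _).le, (arctan_lt_pi_div_two _).le⟩
    · filter_upwards [hconv] with ω hω
      exact (Real.continuous_arctan.continuousAt.tendsto.comp hω)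
  have harcc : Tendsto (fun n => ∫ ω, arctan (g n ω) ∂μ) atTop (nhds c) := by
    have h1 : Tendsto (fun n : ℕ => c + 1 / ((n:ℝ) + 1)) atTop (nhds c) := by
      have := (tendsto_one_div_add_atTop_nhds_zero_nat :
        Tendsto (fun n : ℕ => 1 / ((n:ℝ) + 1)) atTop (nhds 0))
      simpa using tendsto_const_nhds.add this
    refine tendsto_of_tendsto_of_tendsto_of_le_of_le tendsto_const_nhds h1
      (fun n => hgint n) (fun n => (hgint2 n).le)
  have hintG : (∫ ω, arctan (G ω) ∂μ) = c := tendsto_nhds_unique harcconv harcc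
  -- G is a lower bound of S
  have hGlb : ∀ p ∈ S, G ≤ᵐ[μ] p := by
    intro p hp
    -- h n ≤ min (g n) p
    have hhn : ∀ n, ∃ q ∈ S, q ≤ᵐ[μ] g n ∧ q ≤ᵐ[μ] p := fun n => hdir _ (hgS n) p hp
    choose h hhS hh1 hh2 using hhn
    have hmin : ∀ n, c ≤ ∫ ω, arctan (min (g n ω) (p ω)) ∂μ := by
      intro n
      refine le_trans (hcle _ (hhS n)) ?_
      refine integral_mono_ae (intArc _ (hmeas _ (hhS n)).aemeasurable)
        (intArc _ (((hgmeas n).min (hmeas _ hp)).aemeasurable)) ?_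
      filter_upwards [hh1 n, hh2 n] with ω h1 h2
      exact arctan_strictMono.monotone (le_min h1 h2)
    have hminconv : Tendsto (fun n => ∫ ω, arctan (min (g n ω) (p ω)) ∂μ) atTop
        (nhds (∫ ω, arctan (min (G ω) (p ω)) ∂μ)) := by
      refine tendsto_integral_of_dominated_convergence (fun _ => π / 2)
        (fun n => (measurable_arctan.comp ((hgmeas n).min (hmeas _ hp))).aestronglyMeasurable)
        (integrable_const _) (fun n => Eventually.of_forall fun ω => ?_) ?_
      · rw [Real.norm_eq_abs, abs_le]
        exact ⟨(neg_pi_div_two_lt_arctan _).le, (arctan_lt_pi_div_two _).le⟩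
      · filter_upwards [hconv] with ω hω
        exact Real.continuous_arctan.continuousAt.tendsto.comp
          ((hω.min tendsto_const_nhds))
    have hcleG : c ≤ ∫ ω, arctan (min (G ω) (p ω)) ∂μ := ge_of_tendsto' hminconv hmin
    -- but also ∫ arctan (min G p) ≤ ∫ arctan G = c
    have hdiff : (∫ ω, (arctan (G ω) - arctan (min (G ω) (p ω))) ∂μ) = 0 := by
      rw [integral_sub (intArc _ hGmeas) (intArc _ (hGmeas.min (hmeas _ hp).aemeasurable)), hintG]
      linarith [hcleG, integral_mono_ae (intArc _ (hGmeas.min (hmeas _ hp).aemeasurable))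
        (intArc _ hGmeas) (Eventually.of_forall fun ω => arctan_strictMono.monotone (min_le_left _ _))]
    have hnn : 0 ≤ᵐ[μ] fun ω => arctan (G ω) - arctan (min (G ω) (p ω)) :=
      Eventually.of_forall fun ω => sub_nonneg.mpr (arctan_strictMono.monotone (min_le_left _ _))
    have := (integral_eq_zero_iff_of_nonneg_ae hnn
      ((intArc _ hGmeas).sub (intArc _ (hGmeas.min (hmeas _ hp).aemeasurable)))).mp hdiff
    filter_upwards [this] with ω hω
    have : arctan (G ω) = arctan (min (G ω) (p ω)) := by
      have := sub_eq_zero.mp hω; linarith [this]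
    have hGm : G ω = min (G ω) (p ω) := Real.arctan_injective this
    exact le_trans (le_of_eq hGm) (min_le_right _ _)
  have hGI : G ≤ᵐ[μ] I := hI.2 G hGlb
  have hGeqI : G =ᵐ[μ] I := hGI.antisymm hIG
  refine ⟨g, hgS, ?_⟩
  filter_upwards [hconv, hGeqI] with ω h1 h2
  rwa [h2] at h1


lemma integrable_indicator_of_meas {Ω : Type*} {F : MeasurableSpace Ω} {Q : @Measure Ω F}
    {ξ : Ω → ℝ} (hi : Integrable ξ Q) {A : Set Ω} (hA : MeasurableSet[F] A) :
    Integrable (A.indicator ξ) Q := hi.indicator hA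

/-- Given countably many finite partitions `Γ(h)` and `Q ≪ P`, there exists a
single admissible minimizing sequence `ξ_k`: `π (ξ_k) ↓ K(X,Q)` a.s. and
simultaneously `π^{Γ(h)} (ξ_k) ↓ K^{Γ(h)}(X,Q)` a.s. for every `h`. -/
theorem common_minimizing_sequence
    {Ω : Type*} [F : MeasurableSpace Ω] (μ : Measure Ω) [IsProbabilityMeasure μ]
    (m : MeasurableSpace Ω) (hm : m ≤ F)
    (π : (Ω → ℝ) → Ω → ℝ) (hreg : Regular F m μ π)
    (hπbdd : ∀ ξ : Ω → ℝ, IsBddMeas F ξ → IsBddMeas m (π ξ))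
    (Q : @Measure Ω F) [IsProbabilityMeasure Q] (hQ : Q ≪ μ)
    (X : Ω → ℝ) (hX : IsBddMeas F X)
    (Γ : ℕ → Finset (Set Ω)) (hΓ : ∀ h, IsPartition m (Γ h))
    (K : Ω → ℝ)
    (hK : IsEssInf μ
      {g | ∃ ξ : Ω → ℝ, IsBddMeas F ξ ∧ (Q[X|m] ≤ᵐ[Q] Q[ξ|m]) ∧ g = π ξ} K)
    (KΓ : ℕ → Ω → ℝ)
    (hKΓ : ∀ h : ℕ, IsEssInf μ
      {g | ∃ ξ : Ω → ℝ, IsBddMeas F ξ ∧ (Q[X|m] ≤ᵐ[Q] Q[ξ|m]) ∧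
        g = partApprox μ (Γ h) (π ξ)} (KΓ h)) :
    ∃ ξs : ℕ → Ω → ℝ,
      (∀ k, IsBddMeas F (ξs k) ∧ (Q[X|m] ≤ᵐ[Q] Q[ξs k|m])) ∧
      (∀ᵐ ω ∂μ, Antitone (fun k => π (ξs k) ω) ∧
        Tendsto (fun k => π (ξs k) ω) atTop (nhds (K ω))) ∧
      (∀ h : ℕ, ∀ᵐ ω ∂μ, Antitone (fun k => partApprox μ (Γ h) (π (ξs k)) ω) ∧
        Tendsto (fun k => partApprox μ (Γ h) (π (ξs k)) ω) atTop (nhds (KΓ h ω))) := by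
  classical
  -- integrability under Q of bounded measurable functions
  have intQ : ∀ ξ : Ω → ℝ, IsBddMeas F ξ → Integrable ξ Q := by
    rintro ξ ⟨hmeas, C, hC⟩
    exact Integrable.mono' (integrable_const C) hmeas.aestronglyMeasurable
      (Eventually.of_forall fun ω => by simpa [Real.norm_eq_abs] using hC ω)
  -- pasting lemma
  have paste : ∀ ξ1 ξ2 : Ω → ℝ, ∃ ξ3 : Ω → ℝ,
      (IsBddMeas F ξ1 ∧ Q[X|m] ≤ᵐ[Q] Q[ξ1|m]) → (IsBddMeas F ξ2 ∧ Q[X|m] ≤ᵐ[Q] Q[ξ2|m]) →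
      ((IsBddMeas F ξ3 ∧ Q[X|m] ≤ᵐ[Q] Q[ξ3|m]) ∧ π ξ3 ≤ᵐ[μ] π ξ1 ∧ π ξ3 ≤ᵐ[μ] π ξ2) := by
    intro ξ1 ξ2
    by_cases h1 : IsBddMeas F ξ1 ∧ Q[X|m] ≤ᵐ[Q] Q[ξ1|m]
    swap
    · exact ⟨X, fun h1' _ => absurd h1' h1⟩
    by_cases h2 : IsBddMeas F ξ2 ∧ Q[X|m] ≤ᵐ[Q] Q[ξ2|m]
    swap
    · exact ⟨X, fun _ h2' => absurd h2' h2⟩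
    set A : Set Ω := {ω | π ξ1 ω ≤ π ξ2 ω} with hAdef
    have hA : MeasurableSet[m] A := by
      letI : MeasurableSpace Ω := m
      exact measurableSet_le (hπbdd ξ1 h1.1).1 (hπbdd ξ2 h2.1).1
    refine ⟨A.indicator ξ1 + Aᶜ.indicator ξ2, fun _ _ => ?_⟩
    obtain ⟨C1, hC1⟩ := h1.1.2
    obtain ⟨C2, hC2⟩ := h2.1.2
    have hbdd3 : IsBddMeas F (A.indicator ξ1 + Aᶜ.indicator ξ2) := by
      refine ⟨(h1.1.1.indicator (hm _ hA)).add (h2.1.1.indicator (hm _ hA.compl)),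
        max C1 C2, fun ω => ?_⟩
      by_cases hω : ω ∈ A
      · simp only [Pi.add_apply, Set.indicator_of_mem hω,
          Set.indicator_of_notMem (by simpa using hω : ω ∉ Aᶜ), add_zero]
        exact (hC1 ω).trans (le_max_left _ _)
      · simp only [Pi.add_apply, Set.indicator_of_notMem hω,
          Set.indicator_of_mem (by simpa using hω : ω ∈ Aᶜ), zero_add]
        exact (hC2 ω).trans (le_max_right _ _)
    have hint1 : Integrable (A.indicator ξ1) Q := integrable_indicator_of_meas (intQ ξ1 h1.1) (hm _ hA)
    have hint2 : Integrable (Aᶜ.indicator ξ2) Q := integrable_indicator_of_meas (intQ ξ2 h2.1) (hm _ hA.compl)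
    have hce : Q[A.indicator ξ1 + Aᶜ.indicator ξ2|m]
        =ᵐ[Q] A.indicator (Q[ξ1|m]) + Aᶜ.indicator (Q[ξ2|m]) := by
      refine (condExp_add hint1 hint2 m).trans ?_
      exact EventuallyEq.add (condExp_indicator (intQ ξ1 h1.1) hA)
        (condExp_indicator (intQ ξ2 h2.1) hA.compl)
    have hfeas3 : Q[X|m] ≤ᵐ[Q] Q[A.indicator ξ1 + Aᶜ.indicator ξ2|m] := by
      filter_upwards [hce, h1.2, h2.2] with ω heq hx1 hx2
      rw [heq]
      by_cases hω : ω ∈ A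
      · simpa [Set.indicator_of_mem hω,
          Set.indicator_of_notMem (by simpa using hω : ω ∉ Aᶜ)] using hx1
      · simpa [Set.indicator_of_notMem hω,
          Set.indicator_of_mem (by simpa using hω : ω ∈ Aᶜ)] using hx2
    have hπ3 := hreg ξ1 ξ2 h1.1 h2.1 A hA
    constructor
    · exact ⟨hbdd3, hfeas3⟩
    constructor
    · filter_upwards [hπ3] with ω heq
      rw [heq]
      by_cases hω : ω ∈ A
      · simp [Set.indicator_of_mem hω, Set.indicator_of_notMem
          (by simpa using hω : ω ∉ Aᶜ)]
      · simp only [Pi.add_apply, Set.indicator_of_notMem hω,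
          Set.indicator_of_mem (by simpa using hω : ω ∈ Aᶜ), zero_add]
        exact le_of_not_ge hω
    · filter_upwards [hπ3] with ω heq
      rw [heq]
      by_cases hω : ω ∈ A
      · simpa [Set.indicator_of_mem hω, Set.indicator_of_notMem
          (by simpa using hω : ω ∉ Aᶜ)] using (show π ξ1 ω ≤ π ξ2 ω from hω)
      · simp [Set.indicator_of_notMem hω, Set.indicator_of_mem
          (by simpa using hω : ω ∈ Aᶜ)]
  -- the objective transforms
  set T : ℕ → (Ω → ℝ) → Ω → ℝ :=
    fun j => Nat.casesOn j (fun f => f) (fun h => partApprox μ (Γ h)) with hT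
  set J : ℕ → Ω → ℝ := fun j => Nat.casesOn j K KΓ with hJdef
  have Tbdd : ∀ j (f : Ω → ℝ), (∃ C, ∀ ω, |f ω| ≤ C) → ∃ C, ∀ ω, |T j f ω| ≤ C := by
    intro j f hf
    cases j with
    | zero => exact hf
    | succ h => exact partApprox_bdd' μ (Γ h) f
  have Tmeas : ∀ j (ξ : Ω → ℝ), IsBddMeas F ξ → Measurable[F] (T j (π ξ)) := by
    intro j ξ hξ
    cases j with
    | zero => exact (hπbdd ξ hξ).1.mono hm le_rfl
    | succ h => exact partApprox_meas' μ m hm (Γ h) (hΓ h).1 _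
  have Tmono : ∀ j (f g : Ω → ℝ), f ≤ᵐ[μ] g → (∃ C, ∀ ω, |f ω| ≤ C) →
      (∃ C, ∀ ω, |g ω| ≤ C) → T j f ≤ᵐ[μ] T j g := by
    intro j f g hle hf hg
    cases j with
    | zero => exact hle
    | succ h => exact Eventually.of_forall (partApprox_mono' μ (Γ h) hle hf hg)
  set S : ℕ → Set (Ω → ℝ) := fun j =>
    {g | ∃ ξ : Ω → ℝ, IsBddMeas F ξ ∧ (Q[X|m] ≤ᵐ[Q] Q[ξ|m]) ∧ g = T j (π ξ)} with hSdef
  have hJ : ∀ j, IsEssInf μ (S j) (J j) := by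
    intro j
    cases j with
    | zero => exact hK
    | succ h => exact hKΓ h
  have hSne : ∀ j, (S j).Nonempty :=
    fun j => ⟨T j (π X), X, hX, EventuallyLE.refl _ _, rfl⟩
  have hSmeas : ∀ j, ∀ f ∈ S j, Measurable[F] f := by
    rintro j f ⟨ξ, hξ, _, rfl⟩
    exact Tmeas j ξ hξ
  have hSdir : ∀ j, ∀ f ∈ S j, ∀ g ∈ S j, ∃ k ∈ S j, k ≤ᵐ[μ] f ∧ k ≤ᵐ[μ] g := by
    rintro j f ⟨ξ1, hξ1, hc1, rfl⟩ g ⟨ξ2, hξ2, hc2, rfl⟩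
    obtain ⟨ξ3, h3⟩ := paste ξ1 ξ2
    obtain ⟨⟨hb3, hc3⟩, hle1, hle2⟩ := h3 ⟨hξ1, hc1⟩ ⟨hξ2, hc2⟩
    refine ⟨T j (π ξ3), ⟨ξ3, hb3, hc3, rfl⟩, ?_, ?_⟩
    · exact Tmono j _ _ hle1 (hπbdd ξ3 hb3).2 (hπbdd ξ1 hξ1).2
    · exact Tmono j _ _ hle2 (hπbdd ξ3 hb3).2 (hπbdd ξ2 hξ2).2
  -- minimizing sequences for each objective
  have hseq : ∀ j, ∃ u : ℕ → Ω → ℝ, (∀ n, u n ∈ S j) ∧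
      (∀ᵐ ω ∂μ, Tendsto (fun n => u n ω) atTop (nhds (J j ω))) :=
    fun j => exists_seq_of_isEssInf' μ (S j) (hSne j) (hSmeas j) (hSdir j) (hJ j)
  choose u hu htend using hseq
  have hu' : ∀ j n, ∃ ξ : Ω → ℝ, IsBddMeas F ξ ∧ (Q[X|m] ≤ᵐ[Q] Q[ξ|m]) ∧
      u j n = T j (π ξ) := fun j n => hu j n
  choose ζ hζb hζc hζe using hu'
  -- choice function for pasting
  choose pst hpst using paste
  set d : ℕ → Ω → ℝ := fun k => ζ (Nat.unpair k).1 (Nat.unpair k).2 with hdd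
  have dFeas : ∀ k, IsBddMeas F (d k) ∧ Q[X|m] ≤ᵐ[Q] Q[d k|m] :=
    fun k => ⟨hζb _ _, hζc _ _⟩
  set ξs : ℕ → Ω → ℝ := fun k =>
    Nat.rec (motive := fun _ => Ω → ℝ) (d 0) (fun k ih => pst ih (d (k + 1))) k with hξs
  have hFeas : ∀ k, IsBddMeas F (ξs k) ∧ Q[X|m] ≤ᵐ[Q] Q[ξs k|m] := by
    intro k
    induction k with
    | zero => exact dFeas 0
    | succ k ih => exact (hpst (ξs k) (d (k + 1)) ih (dFeas (k + 1))).1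
  have hsucc : ∀ k, π (ξs (k + 1)) ≤ᵐ[μ] π (ξs k) :=
    fun k => (hpst (ξs k) (d (k + 1)) (hFeas k) (dFeas (k + 1))).2.1
  have hd : ∀ k, π (ξs k) ≤ᵐ[μ] π (d k) := by
    intro k
    cases k with
    | zero => exact EventuallyLE.refl _ _
    | succ k => exact (hpst (ξs k) (d (k + 1)) (hFeas k) (dFeas (k + 1))).2.2
  have hchain : ∀ k k', k ≤ k' → π (ξs k') ≤ᵐ[μ] π (ξs k) := by
    intro k k' hkk'
    induction hkk' with
    | refl => exact EventuallyLE.refl _ _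
    | step h ih => exact (hsucc _).trans ih
  -- objectives along the sequence
  have hlow : ∀ j k, J j ≤ᵐ[μ] T j (π (ξs k)) :=
    fun j k => (hJ j).1 _ ⟨ξs k, (hFeas k).1, (hFeas k).2, rfl⟩
  have hmono : ∀ j k, T j (π (ξs (k + 1))) ≤ᵐ[μ] T j (π (ξs k)) :=
    fun j k => Tmono j _ _ (hsucc k) (hπbdd _ (hFeas (k + 1)).1).2 (hπbdd _ (hFeas k).1).2
  have hdζ : ∀ j n, d (Nat.pair j n) = ζ j n := by
    intro j n; rw [hdd]; simp [Nat.unpair_pair]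
  have hcmp : ∀ j n, T j (π (ξs (Nat.pair j n))) ≤ᵐ[μ] u j n := by
    intro j n
    have h1 : π (ξs (Nat.pair j n)) ≤ᵐ[μ] π (ζ j n) := by
      have := hd (Nat.pair j n); rwa [hdζ j n] at this
    have h2 : T j (π (ξs (Nat.pair j n))) ≤ᵐ[μ] T j (π (ζ j n)) :=
      Tmono j _ _ h1 (hπbdd _ (hFeas _).1).2 (hπbdd _ (hζb j n)).2
    rwa [← hζe j n] at h2
  -- final assembly
  have main : ∀ j, ∀ᵐ ω ∂μ, Antitone (fun k => T j (π (ξs k)) ω) ∧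
      Tendsto (fun k => T j (π (ξs k)) ω) atTop (nhds (J j ω)) := by
    intro j
    filter_upwards [ae_all_iff.mpr (fun k => hlow j k), ae_all_iff.mpr (fun k => hmono j k),
      ae_all_iff.mpr (fun n => hcmp j n), htend j] with ω h1 h2 h3 h4
    have hant : Antitone (fun k => T j (π (ξs k)) ω) := antitone_nat_of_succ_le h2
    refine ⟨hant, ?_⟩
    have hbdd : BddBelow (Set.range fun k => T j (π (ξs k)) ω) := by
      refine ⟨J j ω, ?_⟩; rintro x ⟨k, rfl⟩; exact h1 k
    have htend0 := tendsto_atTop_ciInf hant hbdd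
    have hinf : (⨅ k, T j (π (ξs k)) ω) = J j ω := by
      refine le_antisymm ?_ (le_ciInf h1)
      refine ge_of_tendsto' h4 fun n => ?_
      exact le_trans (ciInf_le hbdd (Nat.pair j n)) (h3 n)
    rwa [hinf] at htend0
  exact ⟨ξs, hFeas, main 0, fun h => main (h + 1)⟩

end
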